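/- The set of Hilbert-Samuel functions {H_I : I an ideal of K[x_1,…,x_n]}, where H_I(k) = dim_K K[x_1,…,x_n]/(I + m^{k+1}) and the functions ℕ → ℕ are ordered lexicographically, satisfies the descending chain condition: every decreasing sequence H_1 ≥ H_2 ≥ … stabilizes. -/

import Mathlib

/-- The Hilbert–Samuel function of an ideal `I ⊆ K[x_1,…,x_n]`:
`H_I(k) = dim_K K[x_1,…,x_n]/(I + m^{k+1})`, with `m = (x_1,…,x_n)`. -/
noncomputable def hilbertSamuel {K : Type*} [Field K] {n : ℕ}
    (I : Ideal (MvPolynomial (Fin n) K)) (k : ℕ) : ℕ :=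
  Module.finrank K
    (MvPolynomial (Fin n) K ⧸
      (I ⊔ (Ideal.span (Set.range (MvPolynomial.X : Fin n →
        MvPolynomial (Fin n) K))) ^ (k + 1)))

/-- The lexicographic order on functions `ℕ → ℕ`:  `H ≤ H'` if they are equal,
or at the smallest argument where they differ, `H` is smaller. -/
def lexLE (H H' : ℕ → ℕ) : Prop :=
  H = H' ∨ ∃ k, H k < H' k ∧ ∀ j < k, H j = H' j

noncomputable section
open Classical MvPolynomial

namespace HSDcc


/-- strict lexicographic order on `ℕ → ℕ` -/
def sLt (f g : ℕ → ℕ) : Prop := ∃ k, f k < g k ∧ ∀ j < k, f j = g j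

lemma sLt_trans {f g h : ℕ → ℕ} (h1 : sLt f g) (h2 : sLt g h) : sLt f h := by
  obtain ⟨k1, hk1, he1⟩ := h1
  obtain ⟨k2, hk2, he2⟩ := h2
  rcases lt_trichotomy k1 k2 with hlt | rfl | hlt
  · exact ⟨k1, by rw [he2 k1 hlt] at hk1; exact hk1,
      fun j hj => (he1 j hj).trans (he2 j (hj.trans hlt))⟩
  · exact ⟨k1, hk1.trans hk2, fun j hj => (he1 j hj).trans (he2 j hj)⟩
  · exact ⟨k2, by rw [he1 k2 hlt]; exact hk2,
      fun j hj => (he1 j (hj.trans hlt)).trans (he2 j hj)⟩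

lemma sLt_irrefl (f : ℕ → ℕ) : ¬ sLt f f := by
  rintro ⟨k, hk, -⟩; exact lt_irrefl _ hk

/-- a nonincreasing sequence of naturals is eventually constant -/
lemma eventually_const {f : ℕ → ℕ} (hf : ∀ m, f (m + 1) ≤ f m) :
    ∃ M, ∀ m, M ≤ m → f m = f M := by
  have anti : ∀ a b, a ≤ b → f b ≤ f a := by
    intro a b hab
    induction b, hab using Nat.le_induction with
    | base => exact le_rfl
    | succ b hab ih => exact (hf b).trans ih
  have hne : (Set.range f).Nonempty := ⟨f 0, Set.mem_range_self 0⟩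
  obtain ⟨M, hM⟩ := Nat.sInf_mem hne
  refine ⟨M, fun m hm => le_antisymm ?_ ?_⟩
  · exact anti M m hm
  · rw [hM]; exact Nat.sInf_le (Set.mem_range_self m)

variable {n : ℕ}

local notation "σ" => (Fin n →₀ ℕ)

/-- the finset of all exponents of degree at most `k` -/
def degLE (n k : ℕ) : Finset (Fin n →₀ ℕ) :=
  (Finset.Iic (Finsupp.equivFunOnFinite.symm fun _ => k)).filter
    fun a => Finsupp.degree a ≤ k

lemma mem_degLE {k : ℕ} {a : σ} : a ∈ degLE n k ↔ Finsupp.degree a ≤ k := by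
  constructor
  · intro h; exact (Finset.mem_filter.1 h).2
  · intro h
    refine Finset.mem_filter.2 ⟨Finset.mem_Iic.2 ?_, h⟩
    intro i
    simpa using (Finsupp.le_degree i a).trans h

/-- counting function of a set of exponents -/
def Hcard (E : Set σ) (k : ℕ) : ℕ := ((degLE n k).filter (· ∈ E)).card

lemma Hcard_congr_of_agree {E F : Set σ} {K k : ℕ} (hk : k ≤ K)
    (h : ∀ a : σ, Finsupp.degree a ≤ K → (a ∈ E ↔ a ∈ F)) :
    Hcard E k = Hcard F k := by
  unfold Hcard
  congr 1
  apply Finset.filter_congr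
  intro a ha
  have := h a ((mem_degLE.1 ha).trans hk)
  simp [this]

/-- splitting of the counting function according to top degree -/
lemma Hcard_succ (E : Set σ) (k : ℕ) :
    Hcard E (k + 1) =
      Hcard E k + ((degLE n (k + 1)).filter
        (fun a => a ∈ E ∧ Finsupp.degree a = k + 1)).card := by
  classical
  unfold Hcard
  rw [← Finset.card_union_of_disjoint]
  · congr 1
    ext a
    simp only [Finset.mem_union, Finset.mem_filter, mem_degLE]
    constructor
    · rintro ⟨hdeg, hE⟩
      rcases eq_or_lt_of_le hdeg with heq | hlt
      · exact Or.inr ⟨hdeg, hE, heq⟩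
      · exact Or.inl ⟨Nat.lt_succ_iff.1 hlt, hE⟩
    · rintro (⟨hdeg, hE⟩ | ⟨hdeg, hE, heq⟩)
      · exact ⟨hdeg.trans (Nat.le_succ k), hE⟩
      · exact ⟨hdeg, hE⟩
  · rw [Finset.disjoint_left]
    rintro a ha hb
    have h1 := (Finset.mem_filter.1 ha).1
    have h2 := (Finset.mem_filter.1 hb).2.2
    have := mem_degLE.1 h1
    omega

/-- **Core combinatorial theorem**: there is no sequence of downward closed
sets of exponents whose counting functions are strictly lex decreasing. -/
theorem no_strict_descent (E : ℕ → Set σ)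
    (hdown : ∀ m, ∀ a b : σ, a ≤ b → b ∈ E m → a ∈ E m)
    (hstep : ∀ m, sLt (Hcard (E (m + 1))) (Hcard (E m))) : False := by
  set H : ℕ → ℕ → ℕ := fun m => Hcard (E m) with hH
  have hstep' : ∀ m, sLt (H (m + 1)) (H m) := hstep
  -- strict chain for arbitrary pairs
  have schain : ∀ a b : ℕ, a < b → sLt (H b) (H a) := by
    intro a b hab
    induction b, hab using Nat.le_induction with
    | base => exact hstep' a
    | succ b hab ih => exact sLt_trans (hstep' b) ih
  -- freezing of initial values
  have freeze : ∀ k : ℕ, ∃ M, ∀ m, M ≤ m → ∀ j, j ≤ k → H m j = H M j := by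
    intro k
    induction k with
    | zero =>
      have h0 : ∀ m, H (m + 1) 0 ≤ H m 0 := by
        intro m
        obtain ⟨d, hd, he⟩ := hstep' m
        rcases Nat.eq_zero_or_pos d with rfl | hdpos
        · exact hd.le
        · exact (he 0 hdpos).le
      obtain ⟨M, hM⟩ := eventually_const (f := fun m => H m 0) h0
      exact ⟨M, fun m hm j hj => by
        interval_cases j
        exact hM m hm⟩
    | succ k ih =>
      obtain ⟨M, hM⟩ := ih
      have h1 : ∀ m, H (M + m + 1) (k + 1) ≤ H (M + m) (k + 1) := by
        intro m
        obtain ⟨d, hd, he⟩ := hstep' (M + m)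
        rcases lt_trichotomy d (k + 1) with hlt | rfl | hlt
        · -- impossible : would unfreeze a value ≤ k
          exfalso
          have e1 := hM (M + m) (by omega) d (by omega)
          have e2 := hM (M + m + 1) (by omega) d (by omega)
          omega
        · exact hd.le
        · exact (he (k + 1) hlt).le
      obtain ⟨M', hM'⟩ := eventually_const (f := fun m => H (M + m) (k + 1)) h1
      refine ⟨M + M', fun m hm j hj => ?_⟩
      rcases Nat.lt_succ_iff_lt_or_eq.1 (Nat.lt_succ_of_le hj) with hjk | rfl
      · have := hM m (by omega) j (by omega)
        rw [this, hM (M + M') (by omega) j (by omega)]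
      · obtain ⟨t, rfl⟩ : ∃ t, m = M + t := ⟨m - M, by omega⟩
        have := hM' t (by omega)
        rw [this, hM' M' le_rfl]
  -- the limit function v
  choose Mf hMf using freeze
  set v : ℕ → ℕ := fun k => H (Mf k) k with hv
  have hval : ∀ k m, Mf k ≤ m → ∀ j, j ≤ k → H m j = v j := by
    intro k m hm j hj
    have h1 : H m j = H (Mf k) j := hMf k m hm j hj
    have h2 : H (max (Mf j) (Mf k)) j = H (Mf k) j := hMf k _ (le_max_right _ _) j hj
    have h3 : H (max (Mf j) (Mf k)) j = H (Mf j) j := hMf j _ (le_max_left _ _) j le_rfl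
    rw [h1, ← h2, h3]
  -- every H m differs from v, first at some k_m, where it is bigger
  have lemB : ∀ m, ∃ km, (∀ j, j < km → H m j = v j) ∧ v km < H m km := by
    intro m
    have hne : H m ≠ v := by
      intro hEq
      obtain ⟨d, hd, he⟩ := hstep' m
      set m'' := max (Mf d) (m + 2) with hm''
      have hs : sLt (H m'') (H (m + 1)) := schain (m + 1) m'' (by omega)
      obtain ⟨e, hee, hef⟩ := hs
      have hmd : ∀ j, j ≤ d → H m'' j = v j :=
        fun j hj => hval d m'' (le_max_left _ _) j hj
      rcases lt_trichotomy e d with hlt | rfl | hlt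
      · have h1 : H m'' e = v e := hmd e hlt.le
        have h2 : H (m + 1) e = H m e := he e hlt
        have h3 : H m e = v e := by rw [hEq]
        omega
      · have h1 : H m'' e = v e := hmd e le_rfl
        have h3 : H m e = v e := by rw [hEq]
        omega
      · have h1 : H m'' d = H (m + 1) d := hef d hlt
        have h2 : H m'' d = v d := hmd d le_rfl
        have h3 : H m d = v d := by rw [hEq]
        omega
    have hex : ∃ j, H m j ≠ v j := by
      by_contra hc
      push_neg at hc
      exact hne (funext hc)
    set km := Nat.find hex with hkm
    have hkmne : H m km ≠ v km := Nat.find_spec hex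
    have hkmlt : ∀ j, j < km → H m j = v j := by
      intro j hj
      by_contra hc
      exact Nat.find_min hex hj hc
    refine ⟨km, hkmlt, ?_⟩
    set m' := max (Mf km) (m + 1) with hm'
    have hs : sLt (H m') (H m) := schain m m' (by omega)
    have hmv : ∀ j, j ≤ km → H m' j = v j :=
      fun j hj => hval km m' (le_max_left _ _) j hj
    obtain ⟨e, hee, hef⟩ := hs
    rcases lt_trichotomy e km with hlt | rfl | hlt
    · have h1 : H m' e = v e := hmv e hlt.le
      have h2 : H m e = v e := hkmlt e hlt
      omega
    · have h1 : H m' km = v km := hmv km le_rfl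
      omega
    · have h1 : H m' km = H m km := hef km hlt
      have h2 : H m' km = v km := hmv km le_rfl
      exact absurd (h1.symm.trans h2) hkmne
  choose kB hkB1 hkB2 using lemB
  -- ultrafilter limit set
  set U : Ultrafilter ℕ := Filter.hyperfilter ℕ with hU
  set Einf : Set σ := {a | {m | a ∈ E m} ∈ U} with hEinf
  have hdowninf : ∀ a b : σ, a ≤ b → b ∈ Einf → a ∈ Einf := by
    intro a b hab hb
    exact Filter.mem_of_superset hb fun m hm => hdown m a b hab hm
  have agree_mem : ∀ K : ℕ,
      {m | ∀ a : σ, Finsupp.degree a ≤ K → (a ∈ E m ↔ a ∈ Einf)} ∈ U := by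
    intro K
    have h1 : ∀ a : σ, {m | a ∈ E m ↔ a ∈ Einf} ∈ U := by
      intro a
      by_cases ha : a ∈ Einf
      · exact Filter.mem_of_superset ha fun m hm => by simp [hm, ha]
      · have : {m | a ∈ E m}ᶜ ∈ U := (Ultrafilter.compl_mem_iff_notMem).2 ha
        exact Filter.mem_of_superset this fun m hm => by
          simp only [Set.mem_compl_iff, Set.mem_setOf_eq] at hm
          simp [hm, ha]
    have h2 : (⋂ a ∈ degLE n K, {m | a ∈ E m ↔ a ∈ Einf}) ∈ U :=
      (Filter.biInter_finset_mem (degLE n K)).2 fun a _ => h1 a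
    refine Filter.mem_of_superset h2 fun m hm => ?_
    intro a hdeg
    have ha : a ∈ degLE n K := mem_degLE.2 hdeg
    simp only [Set.mem_iInter] at hm
    exact hm a ha
  have hinf_of_memU : ∀ {S : Set ℕ}, S ∈ U → ∃ m, m ∈ S := by
    intro S hS
    exact Filter.nonempty_of_mem hS
  have cofin_mem : ∀ N : ℕ, {m | N ≤ m} ∈ U := by
    intro N
    have : {m : ℕ | N ≤ m}ᶜ.Finite := by
      apply Set.Finite.subset (Set.finite_Iio N)
      intro x hx
      simp only [Set.mem_compl_iff, Set.mem_setOf_eq, not_le] at hx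
      exact hx
    exact Filter.mem_hyperfilter_of_finite_compl this
  -- the limit set realizes v
  have hHEinf : ∀ k, Hcard Einf k = v k := by
    intro k
    obtain ⟨m, hm⟩ := hinf_of_memU
      (Filter.inter_mem (agree_mem k) (cofin_mem (Mf k)))
    obtain ⟨hm1, hm2⟩ := hm
    have h1 : Hcard Einf k = H m k :=
      Hcard_congr_of_agree le_rfl fun a ha => (hm1 a ha).symm
    rw [h1]
    exact hval k m hm2 k le_rfl
  -- picking witnesses
  have pick : ∀ K : ℕ, ∃ m, ∀ a : σ, Finsupp.degree a ≤ K → (a ∈ E m ↔ a ∈ Einf) := by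
    intro K
    exact hinf_of_memU (agree_mem K)
  choose mP hmP using pick
  -- picked indices have large first-difference position
  have hkP : ∀ K, K < kB (mP K) := by
    intro K
    by_contra hc
    push_neg at hc
    have h1 : H (mP K) (kB (mP K)) = Hcard Einf (kB (mP K)) :=
      Hcard_congr_of_agree hc (hmP K)
    rw [hHEinf] at h1
    have := hkB2 (mP K)
    omega
  -- the extra point of a bumping set
  have bump : ∀ m, ∃ b : σ, b ∈ E m ∧ Finsupp.degree b = kB m ∧ b ∉ Einf := by
    intro m
    by_contra hc
    push_neg at hc
    -- all points of E m in degree kB m lie in Einf : contradicts cardinalities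
    have hcard : H m (kB m) ≤ Hcard Einf (kB m) := by
      rcases Nat.eq_zero_or_pos (kB m) with h0 | hpos
      · -- degree 0 case
        rw [h0]
        have hsub : (degLE n 0).filter (· ∈ E m) ⊆ (degLE n 0).filter (· ∈ Einf) := by
          intro a ha
          obtain ⟨ha1, ha2⟩ := Finset.mem_filter.1 ha
          have hdeg : Finsupp.degree a = 0 := Nat.le_zero.1 (mem_degLE.1 ha1)
          refine Finset.mem_filter.2 ⟨ha1, ?_⟩
          exact hc a ha2 (by rw [h0, hdeg])
        have := Finset.card_le_card hsub
        unfold Hcard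
        simpa [hH, Hcard] using this
      · obtain ⟨k, hk⟩ : ∃ k, kB m = k + 1 := ⟨kB m - 1, by omega⟩
        rw [hk]
        have e1 : H m (k + 1) = H m k + ((degLE n (k + 1)).filter
          (fun a => a ∈ E m ∧ Finsupp.degree a = k + 1)).card := Hcard_succ _ _
        have e2 : Hcard Einf (k + 1) = Hcard Einf k + ((degLE n (k + 1)).filter
          (fun a => a ∈ Einf ∧ Finsupp.degree a = k + 1)).card := Hcard_succ _ _
        have e3 : H m k = v k := hkB1 m k (by omega)
        have e2' := e2
        have e4 : Hcard Einf k = v k := hHEinf k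
        have e5 : ((degLE n (k + 1)).filter
            (fun a => a ∈ E m ∧ Finsupp.degree a = k + 1)).card ≤
            ((degLE n (k + 1)).filter
            (fun a => a ∈ Einf ∧ Finsupp.degree a = k + 1)).card := by
          apply Finset.card_le_card
          intro a ha
          obtain ⟨ha1, ha2, ha3⟩ := Finset.mem_filter.1 ha
          refine Finset.mem_filter.2 ⟨ha1, ?_, ha3⟩
          exact hc a ha2 (by rw [ha3, hk])
        omega
    rw [hHEinf] at hcard
    have := hkB2 m
    omega
  choose bP hbP1 hbP2 hbP3 using bump
  -- the recursive sequence of indices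
  set seq : ℕ → ℕ := fun j => Nat.rec (mP 0) (fun _ prev => mP (kB prev)) j with hseq
  have hseq0 : seq 0 = mP 0 := rfl
  have hseqS : ∀ j, seq (j + 1) = mP (kB (seq j)) := fun j => rfl
  have hmono : ∀ j, kB (seq j) < kB (seq (j + 1)) := by
    intro j
    rw [hseqS j]
    exact hkP (kB (seq j))
  have hmono' : ∀ i j, i ≤ j → kB (seq i) ≤ kB (seq j) := by
    intro i j hij
    induction j, hij using Nat.le_induction with
    | base => exact le_rfl
    | succ j hij ih => exact ih.trans (hmono j).le
  -- Dickson's lemma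
  have hpwo := wellQuasiOrdered_le (α := σ)
  obtain ⟨i, j, hij, hle⟩ := hpwo (fun j => bP (seq j))
  -- derive the contradiction
  obtain ⟨j', rfl⟩ : ∃ j', j = j' + 1 := ⟨j - 1, by omega⟩
  have h1 : bP (seq i) ∈ E (seq (j' + 1)) :=
    hdown _ _ _ hle (hbP1 (seq (j' + 1)))
  have h2 : Finsupp.degree (bP (seq i)) ≤ kB (seq j') := by
    rw [hbP2 (seq i)]
    exact hmono' i j' (by omega)
  have h3 : bP (seq i) ∈ Einf := by
    have := hmP (kB (seq j')) (bP (seq i)) h2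
    rw [← hseqS j'] at this
    exact this.1 h1
  exact hbP3 (seq i) h3



variable {n : ℕ}

lemma degree_eq_sum_univ (a : Fin n →₀ ℕ) : Finsupp.degree a = ∑ i, a i :=
  Finset.sum_subset (Finset.subset_univ _)
    (fun i _ hi => Finsupp.notMem_support_iff.1 hi)

lemma degree_add (a b : Fin n →₀ ℕ) :
    Finsupp.degree (a + b) = Finsupp.degree a + Finsupp.degree b := by
  simp only [degree_eq_sum_univ, Finsupp.add_apply, Finset.sum_add_distrib]

lemma degree_mono {a b : Fin n →₀ ℕ} (h : a ≤ b) :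
    Finsupp.degree a ≤ Finsupp.degree b := by
  simp only [degree_eq_sum_univ]
  exact Finset.sum_le_sum fun i _ => h i

/-- the graded lexicographic comparison function -/
def si (a : Fin n →₀ ℕ) : ℕ ×ₗ Lex (Fin n →₀ ℕ) := toLex (Finsupp.degree a, toLex a)

lemma si_injective : Function.Injective (si (n := n)) := by
  intro a b hab
  have := congrArg (fun x => (ofLex x).2) hab
  simpa [si] using this

lemma si_le_iff {a b : Fin n →₀ ℕ} :
    si a ≤ si b ↔ Finsupp.degree a < Finsupp.degree b ∨
      (Finsupp.degree a = Finsupp.degree b ∧ toLex a ≤ toLex b) :=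
  Prod.Lex.le_iff

lemma si_lt_iff {a b : Fin n →₀ ℕ} :
    si a < si b ↔ Finsupp.degree a < Finsupp.degree b ∨
      (Finsupp.degree a = Finsupp.degree b ∧ toLex a < toLex b) :=
  Prod.Lex.lt_iff

lemma degree_le_of_si_le {a b : Fin n →₀ ℕ} (h : si a ≤ si b) :
    Finsupp.degree a ≤ Finsupp.degree b := by
  rcases si_le_iff.1 h with h | ⟨h, -⟩
  · exact h.le
  · exact h.le

lemma toLex_add_eq (c a : Fin n →₀ ℕ) :
    (toLex (c + a) : Lex (Fin n →₀ ℕ)) = toLex c + toLex a := rfl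

lemma si_add_le_iff {c a b : Fin n →₀ ℕ} : si (c + a) ≤ si (c + b) ↔ si a ≤ si b := by
  simp only [si_le_iff, degree_add, toLex_add_eq, add_lt_add_iff_left,
    add_right_inj, add_le_add_iff_left]

variable {K : Type*} [Field K]

/-- the diagram of initial exponents of an ideal, with respect to the
degree-lexicographic ordering, where "initial" means minimal -/
def diagram (I : Ideal (MvPolynomial (Fin n) K)) : Set (Fin n →₀ ℕ) :=
  {a | ∃ f ∈ I, f ≠ 0 ∧ a ∈ f.support ∧ ∀ b ∈ f.support, si a ≤ si b}

lemma diagram_shift {I : Ideal (MvPolynomial (Fin n) K)} {a : Fin n →₀ ℕ}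
    (ha : a ∈ diagram I) (c : Fin n →₀ ℕ) : c + a ∈ diagram I := by
  obtain ⟨f, hfI, hf0, hasupp, hamin⟩ := ha
  refine ⟨monomial c (1 : K) * f, I.mul_mem_left _ hfI, ?_, ?_, ?_⟩
  · intro h
    have : coeff (c + a) (monomial c (1 : K) * f) = coeff a f := by
      simp [coeff_monomial_mul]
    rw [h] at this
    simp only [coeff_zero] at this
    exact (Finsupp.mem_support_iff.1 hasupp) this.symm
  · rw [MvPolynomial.mem_support_iff]
    have : coeff (c + a) (monomial c (1 : K) * f) = coeff a f := by
      simp [coeff_monomial_mul]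
    rw [this]
    exact Finsupp.mem_support_iff.1 hasupp
  · intro b hb
    rw [MvPolynomial.mem_support_iff, coeff_monomial_mul'] at hb
    split_ifs at hb with hcb
    · have hb' : (b - c) ∈ f.support := by
        rw [MvPolynomial.mem_support_iff]
        intro h
        rw [h] at hb
        simp at hb
      have h1 : si a ≤ si (b - c) := hamin _ hb'
      have h2 : si (c + a) ≤ si (c + (b - c)) := si_add_le_iff.2 h1
      rwa [add_tsub_cancel_of_le hcb] at h2
    · simp at hb

/-- the ideal of polynomials all whose monomials have degree at least `j` -/
def Msup (j : ℕ) : Ideal (MvPolynomial (Fin n) K) :=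
  Ideal.span ((fun s => monomial s (1 : K)) '' {s | j ≤ Finsupp.degree s})

lemma mem_Msup {j : ℕ} {f : MvPolynomial (Fin n) K} :
    f ∈ (Msup j : Ideal (MvPolynomial (Fin n) K)) ↔
      ∀ d ∈ f.support, j ≤ Finsupp.degree d := by
  rw [Msup, mem_ideal_span_monomial_image]
  constructor
  · intro h d hd
    obtain ⟨s, hs, hsd⟩ := h d hd
    exact le_trans hs (degree_mono hsd)
  · intro h d hd
    exact ⟨d, h d hd, le_rfl⟩

lemma monomial_mem_pow (s : Fin n →₀ ℕ) :
    monomial s (1 : K) ∈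
      (Ideal.span (Set.range (X : Fin n → MvPolynomial (Fin n) K))) ^ (Finsupp.degree s) := by
  set d := Finsupp.degree s with hd
  clear_value d
  induction d generalizing s with
  | zero => simp [Ideal.one_eq_top]
  | succ d ih =>
    have hs0 : s ≠ 0 := by
      intro h
      rw [h] at hd
      simp [map_zero] at hd
    obtain ⟨i, hi⟩ : ∃ i, s i ≠ 0 := by
      by_contra hc
      push_neg at hc
      exact hs0 (Finsupp.ext fun i => hc i)
    have hle : Finsupp.single i 1 ≤ s := by
      intro j
      simp only [Finsupp.single_apply]
      split_ifs with h
      · subst h; omega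
      · exact Nat.zero_le _
    set t := s - Finsupp.single i 1 with ht
    have hst : Finsupp.single i 1 + t = s := add_tsub_cancel_of_le hle
    have hdt : d = Finsupp.degree t := by
      have := degree_add (Finsupp.single i 1) t
      rw [hst] at this
      have hsing : Finsupp.degree (Finsupp.single i 1) = 1 := by
        rw [degree_eq_sum_univ]
        simp [Finsupp.single_apply]
      omega
    have : monomial s (1 : K) = X i * monomial t 1 := by
      rw [X, monomial_mul, one_mul, hst]
    rw [this, pow_succ']
    exact Ideal.mul_mem_mul (Ideal.subset_span ⟨i, rfl⟩) (ih t hdt)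

lemma span_X_pow_eq (j : ℕ) :
    (Ideal.span (Set.range (X : Fin n → MvPolynomial (Fin n) K))) ^ j = Msup j := by
  apply le_antisymm
  · induction j with
    | zero =>
      intro f _
      rw [mem_Msup]
      intro d _
      exact Nat.zero_le _
    | succ j ih =>
      rw [pow_succ]
      apply Ideal.mul_le.2
      intro r hr s hs
      have hr' : r ∈ (Msup j : Ideal (MvPolynomial (Fin n) K)) := ih hr
      have hs' : s ∈ (Msup 1 : Ideal (MvPolynomial (Fin n) K)) := by
        revert hs
        apply Ideal.span_le.2
        rintro x ⟨i, rfl⟩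
        rw [SetLike.mem_coe, mem_Msup]
        intro d hd
        rw [support_X] at hd
        simp only [Finset.mem_singleton] at hd
        subst hd
        rw [degree_eq_sum_univ]
        simp [Finsupp.single_apply]
      rw [mem_Msup]
      intro d hd
      have := support_mul r s hd
      rw [Finset.mem_add] at this
      obtain ⟨u, hu, w, hw, rfl⟩ := this
      rw [degree_add]
      have h1 := mem_Msup.1 hr' u hu
      have h2 := mem_Msup.1 hs' w hw
      omega
  · apply Ideal.span_le.2
    rintro x ⟨s, hs, rfl⟩
    simp only [Set.mem_setOf_eq] at hs
    exact SetLike.mem_coe.2 <|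
      (Ideal.pow_le_pow_right hs) (monomial_mem_pow s)

/-- the standard monomials of degree at most `k` -/

def SM (I : Ideal (MvPolynomial (Fin n) K)) (k : ℕ) : Finset (Fin n →₀ ℕ) :=
  (degLE n k).filter (· ∈ {a | a ∉ diagram I})

/-- the ideal `I + m^(k+1)` -/
def Tid (I : Ideal (MvPolynomial (Fin n) K)) (k : ℕ) : Ideal (MvPolynomial (Fin n) K) :=
  I ⊔ (Ideal.span (Set.range (X : Fin n → MvPolynomial (Fin n) K))) ^ (k + 1)

variable (I : Ideal (MvPolynomial (Fin n) K)) (k : ℕ)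

/-- the classes of the standard monomials -/
def bas : {a // a ∈ SM I k} → (MvPolynomial (Fin n) K ⧸ Tid I k) :=
  fun a => Ideal.Quotient.mkₐ K (Tid I k) (monomial a.1 (1 : K))

lemma Msup_le_Tid : (Msup (k + 1) : Ideal (MvPolynomial (Fin n) K)) ≤ Tid I k := by
  rw [← span_X_pow_eq]
  exact le_sup_right

lemma bas_indep : LinearIndependent K (bas I k) := by
  rw [linearIndependent_iff']
  intro t g hsum i₀ hi₀
  by_contra hg
  set s : MvPolynomial (Fin n) K := ∑ i ∈ t, g i • monomial i.1 (1 : K) with hs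
  have hcoeff : ∀ a : Fin n →₀ ℕ, coeff a s =
      ∑ i ∈ t, g i * (if i.1 = a then 1 else 0) := by
    intro a
    rw [hs, MvPolynomial.coeff_sum]
    refine Finset.sum_congr rfl fun i _ => ?_
    rw [coeff_smul, coeff_monomial, smul_eq_mul]
  have hcoeff_mem : ∀ a : Fin n →₀ ℕ, a ∈ s.support → a ∈ SM I k := by
    intro a ha
    rw [MvPolynomial.mem_support_iff, hcoeff] at ha
    by_contra hc
    apply ha
    apply Finset.sum_eq_zero
    intro i hi
    have : i.1 ≠ a := fun h => hc (h ▸ i.2)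
    simp [this]
  have hcoeff_i₀ : coeff i₀.1 s = g i₀ := by
    rw [hcoeff]
    rw [Finset.sum_eq_single i₀]
    · simp
    · intro i hi hne
      have : i.1 ≠ i₀.1 := fun h => hne (Subtype.ext h)
      simp [this]
    · intro h
      exact absurd hi₀ h
  have hmk : Ideal.Quotient.mkₐ K (Tid I k) s = 0 := by
    rw [hs, map_sum, ← hsum]
    refine Finset.sum_congr rfl fun i _ => ?_
    rw [map_smul]
    rfl
  have hsT : s ∈ Tid I k := by
    rw [Ideal.Quotient.mkₐ_eq_mk] at hmk
    exact (Ideal.Quotient.eq_zero_iff_mem).1 hmk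
  obtain ⟨y, hy, z, hz, hyz⟩ := Submodule.mem_sup.1 hsT
  have hz' : ∀ d ∈ z.support, k + 1 ≤ Finsupp.degree d := by
    rw [span_X_pow_eq] at hz
    exact mem_Msup.1 hz
  have hi₀deg : Finsupp.degree i₀.1 ≤ k :=
    mem_degLE.1 (Finset.mem_filter.1 i₀.2).1
  have hzi₀ : coeff i₀.1 z = 0 := by
    by_contra hcz
    have := hz' i₀.1 (MvPolynomial.mem_support_iff.2 hcz)
    omega
  have hcs : ∀ a : Fin n →₀ ℕ, coeff a s = coeff a y + coeff a z := by
    intro a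
    rw [← hyz, MvPolynomial.coeff_add]
  have hyi₀ : coeff i₀.1 y ≠ 0 := by
    have h1 := hcs i₀.1
    rw [hcoeff_i₀, hzi₀, add_zero] at h1
    rw [← h1]
    exact hg
  have hi₀supp : i₀.1 ∈ y.support := MvPolynomial.mem_support_iff.2 hyi₀
  have hy0 : y ≠ 0 := fun h => hyi₀ (by simp [h])
  obtain ⟨a, haS, hamin⟩ := Finset.exists_min_image y.support si ⟨i₀.1, hi₀supp⟩
  have haD : a ∈ diagram I := ⟨y, hy, hy0, haS, hamin⟩
  have hadeg : Finsupp.degree a ≤ k :=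
    le_trans (degree_le_of_si_le (hamin i₀.1 hi₀supp)) hi₀deg
  have hza : coeff a z = 0 := by
    by_contra hcz
    have := hz' a (MvPolynomial.mem_support_iff.2 hcz)
    omega
  have hsa : coeff a s ≠ 0 := by
    rw [hcs a, hza, add_zero]
    exact MvPolynomial.mem_support_iff.1 haS
  have haSM : a ∈ SM I k := hcoeff_mem a (MvPolynomial.mem_support_iff.2 hsa)
  exact (Finset.mem_filter.1 haSM).2 haD

/-- the bad monomials of a polynomial : in its support, of low degree,
but inside the diagram -/
def badf (I : Ideal (MvPolynomial (Fin n) K)) (k : ℕ)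
    (f : MvPolynomial (Fin n) K) : Finset (Fin n →₀ ℕ) :=
  f.support.filter (fun γ => Finsupp.degree γ ≤ k ∧ γ ∈ diagram I)

/-- termination measure for the division procedure -/
def meas (I : Ideal (MvPolynomial (Fin n) K)) (k : ℕ)
    (f : MvPolynomial (Fin n) K) : ℕ :=
  ((degLE n k).filter
    (fun γ => γ ∈ diagram I ∧ ∃ β ∈ badf I k f, si β ≤ si γ)).card

lemma bas_spans_base {f : MvPolynomial (Fin n) K} (hbad : badf I k f = ∅) :
    Ideal.Quotient.mkₐ K (Tid I k) f ∈ Submodule.span K (Set.range (bas I k)) := by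
  have hrw : Ideal.Quotient.mkₐ K (Tid I k) f =
      ∑ d ∈ f.support, Ideal.Quotient.mkₐ K (Tid I k) ((monomial d) (coeff d f)) := by
    rw [← map_sum]
    exact congrArg _ f.as_sum
  rw [hrw]
  apply Submodule.sum_mem
  intro d hd
  by_cases hdeg : Finsupp.degree d ≤ k
  · have hdnot : d ∉ diagram I := by
      intro hdD
      have : d ∈ badf I k f := Finset.mem_filter.2 ⟨hd, hdeg, hdD⟩
      rw [hbad] at this
      exact absurd this (Finset.notMem_empty d)
    have hdSM : d ∈ SM I k :=
      Finset.mem_filter.2 ⟨mem_degLE.2 hdeg, hdnot⟩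
    have : (monomial d) (coeff d f) = coeff d f • monomial d (1 : K) := by
      rw [smul_monomial, smul_eq_mul, mul_one]
    rw [this, map_smul]
    exact Submodule.smul_mem _ _ (Submodule.subset_span ⟨⟨d, hdSM⟩, rfl⟩)
  · have hmem : (monomial d) (coeff d f) ∈ Tid I k := by
      apply Msup_le_Tid I k
      rw [mem_Msup]
      intro e he
      have := MvPolynomial.support_monomial_subset he
      simp only [Finset.mem_singleton] at this
      subst this
      omega
    have : Ideal.Quotient.mkₐ K (Tid I k) ((monomial d) (coeff d f)) = 0 := by
      rw [Ideal.Quotient.mkₐ_eq_mk]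
      exact (Ideal.Quotient.eq_zero_iff_mem).2 hmem
    rw [this]
    exact Submodule.zero_mem _

lemma bas_spans_aux : ∀ (c : ℕ) (f : MvPolynomial (Fin n) K), meas I k f ≤ c →
    Ideal.Quotient.mkₐ K (Tid I k) f ∈ Submodule.span K (Set.range (bas I k)) := by
  intro c
  induction c with
  | zero =>
    intro f hf
    rcases Finset.eq_empty_or_nonempty (badf I k f) with hbad | hbad
    · exact bas_spans_base I k hbad
    · exfalso
      obtain ⟨α, hα⟩ := hbad
      have hαd : α ∈ (degLE n k).filter
          (fun γ => γ ∈ diagram I ∧ ∃ β ∈ badf I k f, si β ≤ si γ) := by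
        obtain ⟨hαs, hαdeg, hαD⟩ := Finset.mem_filter.1 hα
        exact Finset.mem_filter.2 ⟨mem_degLE.2 hαdeg, hαD, α, hα, le_rfl⟩
      have : 0 < meas I k f := Finset.card_pos.2 ⟨α, hαd⟩
      omega
  | succ c ih =>
    intro f hf
    rcases Finset.eq_empty_or_nonempty (badf I k f) with hbad | hbad
    · exact bas_spans_base I k hbad
    · obtain ⟨α, hαS, hαmin⟩ := Finset.exists_min_image (badf I k f) si hbad
      obtain ⟨hαsupp, hαdeg, hαD⟩ := Finset.mem_filter.1 hαS
      obtain ⟨g, hgI, hg0, hgsupp, hgmin⟩ := hαD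
      set cf : K := coeff α f * (coeff α g)⁻¹ with hcf
      set f' : MvPolynomial (Fin n) K := f - cf • g with hf'
      have hgα : coeff α g ≠ 0 := MvPolynomial.mem_support_iff.1 hgsupp
      have hcoeff' : ∀ a : Fin n →₀ ℕ, coeff a f' = coeff a f - cf * coeff a g := by
        intro a
        rw [hf']
        rw [MvPolynomial.coeff_sub, MvPolynomial.coeff_smul, smul_eq_mul]
      have hαnot : α ∉ f'.support := by
        rw [MvPolynomial.notMem_support_iff, hcoeff', hcf]
        field_simp
        simp
      -- every bad monomial of f' is strictly larger than α
      have hstrict : ∀ β ∈ badf I k f', si α < si β := by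
        intro β hβ
        obtain ⟨hβsupp, hβdeg, hβD⟩ := Finset.mem_filter.1 hβ
        have hβα : β ≠ α := fun h => hαnot (h ▸ hβsupp)
        have hle : si α ≤ si β := by
          have : β ∈ f.support ∨ β ∈ g.support := by
            by_contra hc
            push_neg at hc
            have h1 : coeff β f = 0 := MvPolynomial.notMem_support_iff.1 hc.1
            have h2 : coeff β g = 0 := MvPolynomial.notMem_support_iff.1 hc.2
            have := MvPolynomial.mem_support_iff.1 hβsupp
            rw [hcoeff', h1, h2] at this
            simp at this
          rcases this with h | h
          · exact hαmin β (Finset.mem_filter.2 ⟨h, hβdeg, hβD⟩)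
          · exact hgmin β h
        exact lt_of_le_of_ne hle (fun h => hβα (si_injective h).symm)
      -- the measure decreases
      have hmeas : meas I k f' < meas I k f := by
        apply Finset.card_lt_card
        rw [Finset.ssubset_iff_of_subset]
        · refine ⟨α, ?_, ?_⟩
          · exact Finset.mem_filter.2 ⟨mem_degLE.2 hαdeg,
              ⟨g, hgI, hg0, hgsupp, hgmin⟩, α, hαS, le_rfl⟩
          · intro hαin
            obtain ⟨-, -, β, hβ, hβle⟩ := Finset.mem_filter.1 hαin
            exact absurd hβle (not_le.2 (hstrict β hβ))
        · intro γ hγ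
          obtain ⟨hγ1, hγ2, β, hβ, hβle⟩ := Finset.mem_filter.1 hγ
          exact Finset.mem_filter.2 ⟨hγ1, hγ2, α, hαS,
            le_trans (hstrict β hβ).le hβle⟩
      have hmkeq : Ideal.Quotient.mkₐ K (Tid I k) f =
          Ideal.Quotient.mkₐ K (Tid I k) f' := by
        rw [hf', map_sub, map_smul]
        have : Ideal.Quotient.mkₐ K (Tid I k) g = 0 := by
          rw [Ideal.Quotient.mkₐ_eq_mk]
          exact (Ideal.Quotient.eq_zero_iff_mem).2 (Ideal.mem_sup_left hgI)
        rw [this, smul_zero, sub_zero]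
      rw [hmkeq]
      exact ih f' (by omega)

lemma bas_spans : ⊤ ≤ Submodule.span K (Set.range (bas I k)) := by
  intro q _
  obtain ⟨f, rfl⟩ := Ideal.Quotient.mkₐ_surjective K (Tid I k) q
  exact bas_spans_aux I k (meas I k f) f le_rfl

/-- the standard monomials form a basis of the quotient -/
def basQ : Module.Basis {a // a ∈ SM I k} K (MvPolynomial (Fin n) K ⧸ Tid I k) :=
  Module.Basis.mk (bas_indep I k) (bas_spans I k)

theorem hilbertSamuel_eq_card :
    hilbertSamuel I k = Hcard {a | a ∉ diagram I} k := by
  have h1 : hilbertSamuel I k = Module.finrank K (MvPolynomial (Fin n) K ⧸ Tid I k) := rfl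
  rw [h1, Module.finrank_eq_card_basis (basQ I k), Fintype.card_coe]
  unfold Hcard SM
  apply congrArg Finset.card
  convert rfl using 2


variable {K : Type*} [Field K] {n : ℕ}

lemma lexLE_trans {a b c : ℕ → ℕ} (h1 : lexLE a b) (h2 : lexLE b c) : lexLE a c := by
  rcases h1 with rfl | h1
  · exact h2
  rcases h2 with rfl | h2
  · exact Or.inr h1
  · exact Or.inr (sLt_trans h1 h2)

end HSDcc

end

/-- **Descending chain condition for Hilbert–Samuel functions.**  Any sequence
of ideals of `K[x_1,…,x_n]` whose Hilbert–Samuel functions are decreasing in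
the lexicographic order has eventually constant Hilbert–Samuel function. -/
theorem hilbertSamuel_dcc {K : Type*} [Field K] {n : ℕ}
    (I : ℕ → Ideal (MvPolynomial (Fin n) K))
    (hdec : ∀ m : ℕ, lexLE (hilbertSamuel (I (m + 1))) (hilbertSamuel (I m))) :
    ∃ N : ℕ, ∀ m : ℕ, N ≤ m → hilbertSamuel (I m) = hilbertSamuel (I N) := by
  by_contra hcon
  push_neg at hcon
  have chain : ∀ a b : ℕ, a ≤ b → lexLE (hilbertSamuel (I b)) (hilbertSamuel (I a)) := by
    intro a b hab
    induction b, hab using Nat.le_induction with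
    | base => exact Or.inl rfl
    | succ b hab ih => exact HSDcc.lexLE_trans (hdec b) ih
  have strict : ∀ N : ℕ, ∃ m, N < m ∧
      HSDcc.sLt (hilbertSamuel (I m)) (hilbertSamuel (I N)) := by
    intro N
    obtain ⟨m, hm1, hm2⟩ := hcon N
    have hne : N ≠ m := fun h => hm2 (by rw [h])
    have hlt : N < m := lt_of_le_of_ne hm1 hne
    rcases chain N m hm1 with heq | hslt
    · exact absurd heq hm2
    · exact ⟨m, hlt, hslt⟩
  choose nx hnx1 hnx2 using strict
  classical
  set φ : ℕ → ℕ := fun j => Nat.rec 0 (fun _ prev => nx prev) j with hφ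
  have hφs : ∀ j, φ (j + 1) = nx (φ j) := fun j => rfl
  refine HSDcc.no_strict_descent
    (fun j => {a : Fin n →₀ ℕ | a ∉ HSDcc.diagram (I (φ j))}) ?_ ?_
  · intro m a b hab hb haD
    exact hb (by
      have := HSDcc.diagram_shift haD (b - a)
      rwa [tsub_add_cancel_of_le hab] at this)
  · intro m
    have h1 : HSDcc.Hcard {a : Fin n →₀ ℕ | a ∉ HSDcc.diagram (I (φ (m + 1)))} =
        hilbertSamuel (I (φ (m + 1))) := by
      funext k
      exact (HSDcc.hilbertSamuel_eq_card (I (φ (m + 1))) k).symm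
    have h2 : HSDcc.Hcard {a : Fin n →₀ ℕ | a ∉ HSDcc.diagram (I (φ m))} =
        hilbertSamuel (I (φ m)) := by
      funext k
      exact (HSDcc.hilbertSamuel_eq_card (I (φ m)) k).symm
    rw [h1, h2, hφs m]
    exact hnx2 (φ m)
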